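/- Let 1 < p ≤ 2 and q = p/(p−1). For all vectors α, β in a real inner product space (in particular in any Euclidean space ℝ^k), one has ‖α + β‖^q + ‖α − β‖^q ≤ 2(‖α‖^p + ‖β‖^p)^{q−1}, where ‖·‖ is the norm induced by the inner product. -/

import Mathlib

open Real Set


/-- two-point Jensen base case: W(r) for 1 ≤ r ≤ 2. -/
lemma clarkson_W_base {r : ℝ} (hr1 : 1 ≤ r) (hr2 : r ≤ 2) :
    ∀ x : ℝ, 0 ≤ x → x ≤ 1 →
      (1+x)^r + (1-x)^r ≤ 2*(1+x^((r+1)/r))^(r-1) := by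
  intro x hx0 hx1
  have hr0 : (0:ℝ) < r := by linarith
  have hsq : ∀ a : ℝ, a^(2:ℝ) = a*a := by
    intro a
    rw [show (2:ℝ) = ((2:ℕ):ℝ) by norm_num, rpow_natCast]
    ring
  have key : (1+x)^r + (1-x)^r ≤ 2*(1+x^(2:ℝ))^(r-1) := by
    rcases hx1.eq_or_lt with heq | hlt
    · subst heq
      have h0 : ((0:ℝ)) ^ r = 0 := zero_rpow (by linarith)
      have h2 : (2:ℝ)^r = 2^(r-1) * 2 := by
        rw [← rpow_add_one (by norm_num : (2:ℝ) ≠ 0) (r-1)]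
        norm_num
      norm_num [h0, hsq]
      rw [h2]
      ring_nf
      norm_num [show (1:ℝ)+1 = 2 by norm_num]
    · -- x < 1
      have h1x : (0:ℝ) < 1 + x := by linarith
      have h1x' : (0:ℝ) < 1 - x := by linarith
      have hcon := (concaveOn_rpow (p := r-1) (by linarith) (by linarith)).2
        (mem_Ici.2 h1x.le) (mem_Ici.2 h1x'.le)
        (by linarith : (0:ℝ) ≤ (1+x)/2) (by linarith : (0:ℝ) ≤ (1-x)/2)
        (by ring : (1+x)/2 + (1-x)/2 = 1)
      simp only [smul_eq_mul] at hcon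
      have e1 : (1+x)^r = (1+x) * (1+x)^(r-1) := by
        nth_rewrite 1 [show r = (r-1)+1 by ring]
        rw [rpow_add_one h1x.ne' (r-1)]; ring
      have e2 : (1-x)^r = (1-x) * (1-x)^(r-1) := by
        nth_rewrite 1 [show r = (r-1)+1 by ring]
        rw [rpow_add_one h1x'.ne' (r-1)]; ring
      have e3 : (1+x)/2 * (1+x) + (1-x)/2 * (1-x) = 1 + x^(2:ℝ) := by
        rw [hsq]; ring
      rw [e3] at hcon
      rw [e1, e2]
      nlinarith [hcon]
  have hc2 : (r+1)/r ≤ 2 := by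
    rw [div_le_iff₀ hr0]; linarith
  have hc0 : (0:ℝ) ≤ (r+1)/r := by positivity
  have h2 : x^(2:ℝ) ≤ x^((r+1)/r) := rpow_le_rpow_of_exponent_ge' hx0 hx1 hc0 hc2
  calc (1+x)^r + (1-x)^r ≤ 2*(1+x^(2:ℝ))^(r-1) := key
    _ ≤ 2*(1+x^((r+1)/r))^(r-1) := by
        have := rpow_le_rpow (x := 1+x^(2:ℝ)) (y := 1+x^((r+1)/r)) (z := r-1)
          (by positivity) (by linarith) (by linarith)
        linarith

/-- Critical point argument: W(r) implies P(r), for r ≥ 1. -/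
lemma clarkson_P_of_W {r : ℝ} (hr1 : 1 ≤ r)
    (hW : ∀ x : ℝ, 0 ≤ x → x ≤ 1 →
      (1+x)^r + (1-x)^r ≤ 2*(1+x^((r+1)/r))^(r-1)) :
    ∀ x : ℝ, 0 ≤ x → x ≤ 1 →
      (1+x)^(r+1) + (1-x)^(r+1) ≤ 2*(1+x^((r+1)/r))^r := by
  have hr0 : (0:ℝ) < r := by linarith
  set c : ℝ := (r+1)/r with hc
  have hc1 : 1 ≤ c := by
    rw [hc, le_div_iff₀ hr0]; linarith
  have hrc : r * c = r + 1 := by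
    rw [hc]; field_simp
  set F : ℝ → ℝ := fun x => 2*(1+x^c)^r - (1+x)^(r+1) - (1-x)^(r+1) with hF
  have hd : ∀ x : ℝ, 0 ≤ x → x ≤ 1 → HasDerivAt F
      (2*((c * x^(c-1)) * r * (1+x^c)^(r-1))
        - 1 * (r+1) * (1+x)^(r+1-1) - (-1) * (r+1) * (1-x)^(r+1-1)) x := by
    intro x hx0 hx1
    have h1 : HasDerivAt (fun y : ℝ => (1+y^c)^r) ((c * x^(c-1)) * r * (1+x^c)^(r-1)) x := by
      have hbase : HasDerivAt (fun y : ℝ => 1+y^c) (c * x^(c-1)) x :=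
        (hasDerivAt_rpow_const (Or.inr hc1)).const_add 1
      have hpos : (0:ℝ) < 1 + x^c := by
        have : (0:ℝ) ≤ x^c := rpow_nonneg hx0 c
        linarith
      exact hbase.rpow_const (Or.inl hpos.ne')
    have h2 : HasDerivAt (fun y : ℝ => (1+y)^(r+1)) (1 * (r+1) * (1+x)^(r+1-1)) x := by
      have hbase : HasDerivAt (fun y : ℝ => 1+y) 1 x := (hasDerivAt_id x).const_add 1
      exact hbase.rpow_const (Or.inr (by linarith))
    have h3 : HasDerivAt (fun y : ℝ => (1-y)^(r+1)) ((-1) * (r+1) * (1-x)^(r+1-1)) x := by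
      have hbase : HasDerivAt (fun y : ℝ => 1-y) (-1) x := (hasDerivAt_id x).const_sub 1
      exact hbase.rpow_const (Or.inr (by linarith))
    exact ((h1.const_mul 2).sub h2).sub h3
  have hcont : ContinuousOn F (Icc 0 1) := fun x hx =>
    (hd x hx.1 hx.2).continuousAt.continuousWithinAt
  obtain ⟨z, hz, hmin⟩ := isCompact_Icc.exists_isMinOn (nonempty_Icc.mpr zero_le_one) hcont
  have hcpos : (0:ℝ) < c := by positivity
  have hF0 : F 0 = 0 := by
    have h0c : (0:ℝ)^c = 0 := zero_rpow hcpos.ne'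
    simp only [hF, h0c]
    norm_num
  have hF1 : F 1 = 0 := by
    have h1c : (1:ℝ)^c = 1 := one_rpow c
    have h0r : (0:ℝ)^(r+1) = 0 := zero_rpow (by linarith)
    have h2 : (2:ℝ)^(r+1) = 2^r * 2 := rpow_add_one (by norm_num) r
    simp only [hF, h1c]
    norm_num [h0r]
    rw [h2]; ring
  -- the minimum value is nonnegative
  have hFz : 0 ≤ F z := by
    rcases eq_or_lt_of_le hz.1 with h0 | h0
    · rw [← h0, hF0]
    rcases eq_or_lt_of_le hz.2 with h1 | h1
    · rw [h1, hF1]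
    -- interior critical point
    have hloc : IsLocalMin F z := hmin.isLocalMin (Icc_mem_nhds h0 h1)
    have hder0 := hloc.hasDerivAt_eq_zero (hd z hz.1 hz.2)
    rw [show r+1-1 = r by ring] at hder0
    set A : ℝ := (1+z^c)^(r-1) with hA
    set a : ℝ := (1+z)^r with ha
    set b : ℝ := (1-z)^r with hb
    set w : ℝ := z^(c-1) with hw
    -- critical point relation
    have hfac : (r+1) * (2*w*A - a + b) = 0 := by
      linear_combination hder0 - 2*w*A*hrc
    have hcrit : a - b = 2*w*A := by
      have hne : (r+1) ≠ 0 := by positivity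
      have := mul_eq_zero.mp hfac
      rcases this with h | h
      · exact absurd h hne
      · linarith
    -- identities
    have id1 : (1+z)^(r+1) = a*(1+z) := by
      rw [ha, rpow_add_one (by linarith : (1:ℝ)+z ≠ 0) r]
    have id2 : (1-z)^(r+1) = b*(1-z) := by
      rw [hb, rpow_add_one (by linarith : (1:ℝ)-z ≠ 0) r]
    have id3 : (1+z^c)^r = A*(1+z^c) := by
      have : (0:ℝ) < 1 + z^c := by
        have : (0:ℝ) ≤ z^c := rpow_nonneg hz.1 c
        linarith
      rw [hA, ← rpow_add_one this.ne' (r-1), show r-1+1 = r by ring]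
    have id4 : z^c = w*z := by
      rw [hw, ← rpow_add_one h0.ne' (c-1), show c-1+1 = c by ring]
    have hWz : a + b ≤ 2*A := hW z hz.1 hz.2
    have hFeq : F z = 2*A - (a+b) := by
      simp only [hF]
      rw [id3, id1, id2, id4]
      linear_combination (-z) * hcrit
    rw [hFeq]; linarith
  intro x hx0 hx1
  have := hmin (mem_Icc.mpr ⟨hx0, hx1⟩)
  simp only [hF] at this hFz
  have hfx : (0:ℝ) ≤ 2*(1+x^c)^r - (1+x)^(r+1) - (1-x)^(r+1) := le_trans hFz this
  linarith

lemma clarkson_W_of_P {r : ℝ} (hr2 : 2 ≤ r)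
    (hP : ∀ x : ℝ, 0 ≤ x → x ≤ 1 →
      (1+x)^((r-1)+1) + (1-x)^((r-1)+1) ≤ 2*(1+x^(((r-1)+1)/(r-1)))^(r-1)) :
    ∀ x : ℝ, 0 ≤ x → x ≤ 1 →
      (1+x)^r + (1-x)^r ≤ 2*(1+x^((r+1)/r))^(r-1) := by
  intro x hx0 hx1
  have h := hP x hx0 hx1
  rw [show (r-1)+1 = r by ring] at h
  have hexp : (r+1)/r ≤ r/(r-1) := by
    rw [div_le_div_iff₀ (by linarith) (by linarith)]
    nlinarith
  have hxle : x^(r/(r-1)) ≤ x^((r+1)/r) :=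
    rpow_le_rpow_of_exponent_ge' hx0 hx1 (by positivity) hexp
  have hbase : (1+x^(r/(r-1)))^(r-1) ≤ (1+x^((r+1)/r))^(r-1) :=
    rpow_le_rpow (x := 1+x^(r/(r-1))) (by positivity) (by linarith) (by linarith)
  calc (1+x)^r + (1-x)^r ≤ 2*(1+x^(r/(r-1)))^(r-1) := h
    _ ≤ 2*(1+x^((r+1)/r))^(r-1) := by linarith

lemma clarkson_P_all {r : ℝ} (hr1 : 1 ≤ r) :
    ∀ x : ℝ, 0 ≤ x → x ≤ 1 →
      (1+x)^(r+1) + (1-x)^(r+1) ≤ 2*(1+x^((r+1)/r))^r := by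
  obtain ⟨n, hn⟩ := exists_nat_ge (r - 2)
  induction n generalizing r with
  | zero =>
    exact clarkson_P_of_W hr1 (clarkson_W_base hr1 (by push_cast at hn; linarith))
  | succ n ih =>
    by_cases hcase : r ≤ n + 2
    · exact ih hr1 (by linarith)
    · push_neg at hcase
      have h2r : 2 ≤ r := by
        have : (0:ℝ) ≤ (n:ℝ) := Nat.cast_nonneg n
        linarith
      have hP' := ih (r := r-1) (by linarith)
        (by push_cast at hn ⊢; linarith)
      exact clarkson_P_of_W hr1 (clarkson_W_of_P h2r hP')

/-- Scalar Clarkson inequality. -/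
lemma clarkson_scalar {p q : ℝ} (hp1 : 1 < p) (hp2 : p ≤ 2) (hq : q = p / (p-1))
    {x y : ℝ} (hy0 : 0 ≤ y) (hyx : y ≤ x) :
    (x+y)^q + (x-y)^q ≤ 2*(x^p + y^p)^(q-1) := by
  have hp0 : (0:ℝ) < p - 1 := by linarith
  have hq2 : 2 ≤ q := by
    rw [hq, le_div_iff₀ hp0]; linarith
  have hq0 : (0:ℝ) < q := by linarith
  have hpq : p * (q - 1) = q := by
    rw [hq]; field_simp; ring
  rcases eq_or_lt_of_le (hy0.trans hyx) with hx0 | hx0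
  · -- x = 0, hence y = 0
    have hx : x = 0 := hx0.symm
    have hyy : y = 0 := le_antisymm (hx ▸ hyx) hy0
    rw [hx, hyy]
    rw [show (0:ℝ)+0 = 0 by ring, show (0:ℝ)-0 = 0 by ring]
    rw [zero_rpow hq0.ne', zero_rpow (by linarith : p ≠ 0)]
    rw [show (0:ℝ)+0 = 0 by ring, zero_rpow (by linarith : q-1 ≠ 0)]
    norm_num
  · -- x > 0
    set t : ℝ := y / x with ht
    have ht0 : 0 ≤ t := div_nonneg hy0 hx0.le
    have ht1 : t ≤ 1 := (div_le_one hx0).mpr hyx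
    have hr1 : (1:ℝ) ≤ q - 1 := by linarith
    have hP := clarkson_P_all hr1 t ht0 ht1
    rw [show q-1+1 = q by ring] at hP
    have hcp : q/(q-1) = p := by
      rw [hq]; field_simp; ring
    rw [hcp] at hP
    -- multiply by x^q
    have hxq : (0:ℝ) < x^q := rpow_pos_of_pos hx0 q
    have hmul := mul_le_mul_of_nonneg_left hP hxq.le
    -- rewrite LHS
    have e1 : x^q * ((1+t)^q + (1-t)^q) = (x+y)^q + (x-y)^q := by
      rw [mul_add, ← mul_rpow hx0.le (by linarith : (0:ℝ) ≤ 1+t),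
        ← mul_rpow hx0.le (by linarith : (0:ℝ) ≤ 1-t)]
      rw [show x*(1+t) = x + y by rw [ht]; field_simp, show x*(1-t) = x - y by rw [ht]; field_simp]
    have e2 : x^q * (2*(1+t^p)^(q-1)) = 2*(x^p + y^p)^(q-1) := by
      have hxp : (0:ℝ) < x^p := rpow_pos_of_pos hx0 p
      have e3 : x^p*(1+t^p) = x^p + y^p := by
        rw [mul_add, mul_one, ← mul_rpow hx0.le ht0,
          show x*t = y by rw [ht]; field_simp]
      have htp : (0:ℝ) ≤ 1 + t^p := by positivity
      calc x^q * (2*(1+t^p)^(q-1))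
          = 2*((x^p)^(q-1)*(1+t^p)^(q-1)) := by
            nth_rewrite 1 [← hpq]
            rw [rpow_mul hx0.le]; ring
        _ = 2*((x^p*(1+t^p))^(q-1)) := by rw [mul_rpow hxp.le htp]
        _ = 2*(x^p + y^p)^(q-1) := by rw [e3]
    rw [e1, e2] at hmul
    exact hmul

/-- convexity: endpoints dominate for `u^e + (K-u)^e` on a symmetric interval. -/
lemma clarkson_convex_pair {e m M K u : ℝ} (he : 1 ≤ e) (hm : 0 ≤ m) (hmM : m ≤ M)
    (hK : m + M = K) (hu1 : m ≤ u) (hu2 : u ≤ M) :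
    u^e + (K-u)^e ≤ m^e + M^e := by
  rcases eq_or_lt_of_le hmM with heq | hlt
  · have hum : u = m := le_antisymm (heq ▸ hu2) hu1
    subst hum
    rw [show K - u = M by rw [← hK]; ring, heq]
  · have hd : (0:ℝ) < M - m := by linarith
    set a : ℝ := (M-u)/(M-m) with ha
    set b : ℝ := (u-m)/(M-m) with hb
    have ha0 : 0 ≤ a := div_nonneg (by linarith) hd.le
    have hb0 : 0 ≤ b := div_nonneg (by linarith) hd.le
    have hab : a + b = 1 := by rw [ha, hb]; field_simp; ring
    have hM0 : 0 ≤ M := hm.trans hmM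
    have cu : u = a*m + b*M := by rw [ha, hb]; field_simp; ring
    have cv : K - u = a*M + b*m := by rw [ha, hb, ← hK]; field_simp; ring
    have hcon := convexOn_rpow he
    have h1 := hcon.2 (mem_Ici.2 hm) (mem_Ici.2 hM0) ha0 hb0 hab
    have h2 := hcon.2 (mem_Ici.2 hM0) (mem_Ici.2 hm) ha0 hb0 hab
    simp only [smul_eq_mul] at h1 h2
    rw [← cu] at h1
    rw [show a*M + b*m = a • M + b • m from rfl] at cv
    simp only [smul_eq_mul] at cv
    rw [← cv] at h2
    have hsum : a*m^e + b*M^e + (a*M^e + b*m^e) = m^e + M^e := by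
      linear_combination (m^e + M^e) * hab
    linarith

/-- **Inner product space Clarkson-type inequality (inequality (6)).**
For `1 < p ≤ 2` with conjugate exponent `q = p/(p-1)`, and all vectors `α, β` in a real
inner product space: `‖α + β‖^q + ‖α - β‖^q ≤ 2(‖α‖^p + ‖β‖^p)^{q-1}`. -/
theorem inner_product_clarkson {V : Type*} [NormedAddCommGroup V] [InnerProductSpace ℝ V]
    (p q : ℝ) (hp1 : 1 < p) (hp2 : p ≤ 2) (hq : q = p / (p - 1)) (α β : V) :
    ‖α + β‖ ^ q + ‖α - β‖ ^ q ≤ 2 * (‖α‖ ^ p + ‖β‖ ^ p) ^ (q - 1) := by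
  have hp0 : (0:ℝ) < p - 1 := by linarith
  have hq2 : 2 ≤ q := by rw [hq, le_div_iff₀ hp0]; linarith
  -- main auxiliary statement, assuming ‖β‖ ≤ ‖α‖
  have aux : ∀ γ δ : V, ‖δ‖ ≤ ‖γ‖ →
      ‖γ + δ‖ ^ q + ‖γ - δ‖ ^ q ≤ 2 * (‖γ‖ ^ p + ‖δ‖ ^ p) ^ (q - 1) := by
    intro γ δ hba
    set x : ℝ := ‖γ‖ with hx
    set y : ℝ := ‖δ‖ with hy
    have hy0 : (0:ℝ) ≤ y := norm_nonneg δ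
    have hx0 : (0:ℝ) ≤ x := norm_nonneg γ
    have hsq : ∀ a : ℝ, a^(2:ℝ) = a*a := by
      intro a
      rw [show (2:ℝ) = ((2:ℕ):ℝ) by norm_num, rpow_natCast]
      ring
    have par : ‖γ+δ‖*‖γ+δ‖ + ‖γ-δ‖*‖γ-δ‖ = 2*(x*x + y*y) :=
      by simpa only [sq] using parallelogram_law_with_norm ℝ γ δ
    -- bounds on ‖γ+δ‖
    have hub : ‖γ+δ‖ ≤ x + y := norm_add_le γ δ
    have hlb : x - y ≤ ‖γ+δ‖ := by
      have := norm_sub_le (γ+δ) δ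
      simp only [add_sub_cancel_right] at this
      linarith
    have key := clarkson_convex_pair (e := q/2) (m := (x-y)^(2:ℝ)) (M := (x+y)^(2:ℝ))
      (K := 2*(x*x+y*y)) (u := ‖γ+δ‖^(2:ℝ))
      (by linarith : (1:ℝ) ≤ q/2)
      (rpow_nonneg (by linarith) 2)
      (rpow_le_rpow (by linarith) (by linarith) (by norm_num))
      (by rw [hsq, hsq]; ring)
      (rpow_le_rpow (by linarith) hlb (by norm_num))
      (rpow_le_rpow (norm_nonneg _) hub (by norm_num))
    have epow : ∀ a : ℝ, 0 ≤ a → (a^(2:ℝ))^(q/2) = a^q := by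
      intro a ha
      rw [← rpow_mul ha, show (2:ℝ)*(q/2) = q by ring]
    have emid : 2*(x*x+y*y) - ‖γ+δ‖^(2:ℝ) = ‖γ-δ‖^(2:ℝ) := by
      rw [hsq, hsq]; linarith [par]
    rw [emid, epow _ (norm_nonneg (γ+δ)), epow _ (norm_nonneg (γ-δ)),
      epow _ (by linarith : (0:ℝ) ≤ x-y), epow _ (by linarith : (0:ℝ) ≤ x+y)] at key
    calc ‖γ+δ‖^q + ‖γ-δ‖^q ≤ (x-y)^q + (x+y)^q := key
      _ = (x+y)^q + (x-y)^q := by ring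
      _ ≤ 2*(x^p + y^p)^(q-1) := clarkson_scalar hp1 hp2 hq hy0 hba
  rcases le_total ‖β‖ ‖α‖ with h | h
  · exact aux α β h
  · have := aux β α h
    rw [add_comm β α, norm_sub_rev β α, add_comm (‖β‖^p) (‖α‖^p)] at this
    exact this
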